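/- Let k, m be positive integers, M ⊂ [k], K > 0; let G be a directed bipartite graph with left vertices [k] and right vertices [m] (with i←j only if i→j) satisfying: for some δ ∈ (0,1] and ε ∈ (0, 1/32), |∂_in(I)| ≥ Σ_{i∈I}|∂_in(i)| − εK|I| for any set of right vertices I with |I| ≤ δm. Fix a non-empty J ⊂ T_{K,∞}(G) with |J| ≤ δm/2 such that (2/K)Σ_{i∈M}|∂_out(i)| ≤ |J|/2. Then any M-shell 𝒜 = (𝒞_ℓ)_{ℓ=0}^d for G of depth d ≥ 1 centered in J satisfies |𝒞_ℓ| ≥ min(⌊δm/4⌋, (32ε)^{-ℓ}|J|) for all 0 ≤ ℓ ≤ d. -/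

import Mathlib

lemma aux_stab {α : Type*} [Finite α] (U : ℕ → Set α) (hU : Monotone U) :
    ∃ L, ∀ n, U n ⊆ U L := by
  obtain ⟨L, hL⟩ : ∃ L, ∀ n, (U n).ncard ≤ (U L).ncard := by
    have hbdd : BddAbove (Set.range fun n => (U n).ncard) := by
      refine ⟨Nat.card α, ?_⟩
      rintro x ⟨n, rfl⟩
      simpa [Set.ncard_univ] using Set.ncard_le_ncard (Set.subset_univ (U n)) (Set.toFinite _)
    obtain ⟨L, hL⟩ := Nat.sSup_mem (Set.range_nonempty _) hbdd
    refine ⟨L, fun n => ?_⟩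
    have := le_csSup hbdd (Set.mem_range_self (f := fun n => (U n).ncard) n)
    simpa [← hL] using this
  refine ⟨L, fun n => ?_⟩
  rcases le_total n L with h | h
  · exact hU h
  · exact (Set.eq_of_subset_of_ncard_le (hU h) (hL n) (Set.toFinite _)).ge

lemma aux_count {α β : Type*} (P : α → β → Prop) [∀ i j, Decidable (P i j)]
    (Q : Finset α) (I : Finset β) :
    ∑ j ∈ I, (Q.filter (fun i => P i j)).card
      = ∑ i ∈ Q, (I.filter (fun j => P i j)).card := by
  simp only [Finset.card_filter]
  exact Finset.sum_comm

lemma ncard_filter {α : Type*} [Fintype α] (p : α → Prop) [DecidablePred p] :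
    {x | p x}.ncard = (Finset.univ.filter p).card := by
  rw [← Set.ncard_coe_finset]; congr 1; ext x; simp

set_option maxHeartbeats 1000000 in
theorem stmt4 (k m : ℕ) (hk : 0 < k) (hm : 0 < m)
    (toE fromE : Fin k → Fin m → Prop)
    (hsub : ∀ i j, fromE i j → toE i j)
    (M : Finset (Fin k)) (K : ℝ) (hK : 0 < K)
    (δ ε : ℝ) (hδ : δ ∈ Set.Ioc (0:ℝ) 1) (hε : ε ∈ Set.Ioo (0:ℝ) (1/32))
    (hexp : ∀ I : Finset (Fin m), (I.card : ℝ) ≤ δ * m →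
      (∑ j ∈ I, (Set.ncard {i | toE i j} : ℝ)) - ε * K * I.card ≤
        (Set.ncard {i | ∃ j ∈ I, toE i j} : ℝ))
    (T : ℕ → Set (Fin m))
    (hT : ∀ ℓ, 1 ≤ ℓ → T ℓ = {j | (∀ h ∈ Set.Ico 1 ℓ, j ∉ T h) ∧
      ((Set.ncard ({i | fromE i j} \
        {i | ∃ j' ∈ ⋃ h ∈ Set.Ico 1 ℓ, T h, toE i j'}) : ℝ) ≤ K)})
    (J : Set (Fin m)) (hJne : J.Nonempty)
    (hJinf : J ⊆ {j | ∀ ℓ, 1 ≤ ℓ → j ∉ T ℓ})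
    (hJcard : (J.ncard : ℝ) ≤ δ * m / 2)
    (hM : (2 / K) * ∑ i ∈ M, (Set.ncard {j | fromE i j} : ℝ) ≤ (J.ncard : ℝ) / 2)
    (d : ℕ) (hd : 1 ≤ d) (𝒞 : ℕ → Set (Fin m))
    (h𝒞0 : 𝒞 0 = J)
    (hshell : ∀ ℓ < d, ∀ j ∈ 𝒞 ℓ, ∀ i : Fin k, i ∉ M → fromE i j →
      ∃ j' ∈ 𝒞 (ℓ + 1), j' ≠ j ∧ toE i j') :
    ∀ ℓ ≤ d, min ((⌊δ * m / 4⌋ : ℤ) : ℝ) (((32 * ε)⁻¹) ^ ℓ * J.ncard) ≤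
      ((𝒞 ℓ).ncard : ℝ) := by
  classical
  obtain ⟨hδ0, hδ1⟩ := hδ
  obtain ⟨hε0, hε1⟩ := hε
  set F : ℤ := ⌊δ * m / 4⌋ with hFdef
  set c : ℝ := (32 * ε)⁻¹ with hcdef
  set Jc : ℝ := (J.ncard : ℝ) with hJcdef
  set Tinf : Set (Fin m) := {j | ∀ ℓ, 1 ≤ ℓ → j ∉ T ℓ} with hTinfdef
  -- stabilization
  have hUmono : Monotone (fun ℓ => ⋃ h ∈ Set.Ico 1 ℓ, T h) := by
    intro a b hab
    exact Set.biUnion_subset_biUnion_left (fun h hh => ⟨hh.1, lt_of_lt_of_le hh.2 hab⟩)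
  obtain ⟨L, hL⟩ := aux_stab (fun ℓ => ⋃ h ∈ Set.Ico 1 ℓ, T h) hUmono
  set W : Set (Fin m) := ⋃ h ∈ Set.Ico 1 (L+1), T h with hWdef
  have hTW : ∀ h, 1 ≤ h → T h ⊆ W := by
    intro h hh j hj
    have h1 : j ∈ ⋃ h' ∈ Set.Ico 1 (h+1), T h' :=
      Set.mem_biUnion ⟨hh, Nat.lt_succ_self h⟩ hj
    exact hUmono (Nat.le_succ L) (hL (h+1) h1)
  -- degree bound for infinite-type vertices
  set Good : Fin k → Prop := fun i => ∀ j' ∈ W, ¬ toE i j' with hGooddef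
  set Dj : Fin m → Finset (Fin k) :=
    fun j => Finset.univ.filter (fun i => fromE i j ∧ Good i) with hDjdef
  have hdeg : ∀ j ∈ Tinf, K < ((Dj j).card : ℝ) := by
    intro j hj
    have hj1 : j ∉ T (L+1) := hj (L+1) (by omega)
    rw [hT (L+1) (by omega)] at hj1
    simp only [Set.mem_setOf_eq, not_and, not_le] at hj1
    have h2 := hj1 (fun h hh => hj h hh.1)
    have hseteq : ({i | fromE i j} \ {i | ∃ j' ∈ W, toE i j'}) =
        {i | fromE i j ∧ Good i} := by
      ext i
      simp only [Set.mem_diff, Set.mem_setOf_eq, hGooddef]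
      push_neg
      tauto
    rw [hseteq, ncard_filter] at h2
    exact h2
  -- basic numeric facts
  have hc1 : (1:ℝ) ≤ c := by
    rw [hcdef]
    rw [le_inv_comm₀] <;> nlinarith
  have hJ1 : (1:ℝ) ≤ Jc := by
    have := (Set.ncard_pos (Set.toFinite J)).mpr hJne
    rw [hJcdef]; exact_mod_cast this
  -- main induction
  have key : ∀ ℓ, ℓ ≤ d → min ((F:ℝ)) (c ^ ℓ * Jc) ≤ ((𝒞 ℓ ∩ Tinf).ncard : ℝ) := by
    intro ℓ
    induction ℓ with
    | zero =>
      intro _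
      have : 𝒞 0 ∩ Tinf = J := by
        rw [h𝒞0]
        exact Set.inter_eq_left.mpr hJinf
      rw [this, pow_zero, one_mul]
      exact min_le_right _ _
    | succ n ih =>
      intro hnd
      have IH := ih (Nat.le_of_lt (Nat.lt_of_succ_le hnd))
      by_cases hF1 : (F:ℝ) < 1
      · -- F ≤ 0, min ≤ 0
        have hF0 : (F:ℝ) ≤ 0 := by
          have : F ≤ 0 := by exact_mod_cast Int.lt_add_one_iff.mp (by exact_mod_cast hF1)
          exact_mod_cast this
        calc min ((F:ℝ)) (c ^ (n+1) * Jc) ≤ (F:ℝ) := min_le_left _ _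
          _ ≤ 0 := hF0
          _ ≤ _ := Nat.cast_nonneg _
      push_neg at hF1
      by_contra hcon
      push_neg at hcon
      -- notation
      set A : Set (Fin m) := 𝒞 n ∩ Tinf with hAdef
      set A' : Set (Fin m) := 𝒞 (n+1) ∩ Tinf with hA'def
      set A'f : Finset (Fin m) := (Set.toFinite A').toFinset with hA'fdef
      have hA'c : (A'f.card : ℝ) = (A'.ncard : ℝ) := by
        rw [Set.ncard_eq_toFinset_card _ (Set.toFinite A')]
      set a' : ℝ := (A'.ncard : ℝ) with ha'def
      have ha'F : a' < (F:ℝ) := lt_of_lt_of_le hcon (min_le_left _ _)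
      have ha'ct : a' < c^(n+1) * Jc := lt_of_lt_of_le hcon (min_le_right _ _)
      have ha'0 : 0 ≤ a' := Nat.cast_nonneg _
      -- numeric facts
      have hFle : (F:ℝ) ≤ δ * m / 4 := Int.floor_le _
      have hδm : 4 ≤ δ * m := by nlinarith
      have hcn : 1 ≤ c ^ n := one_le_pow₀ hc1
      have hJ3F : Jc ≤ 3 * (F:ℝ) := by
        have h1 : (J.ncard:ℝ) < 2*(F:ℝ) + 2 := by
          have := Int.lt_floor_add_one (δ*m/4)
          rw [← hFdef] at this
          linarith [hJcard]
        have h2 : (J.ncard:ℤ) < 2*F + 2 := by exact_mod_cast h1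
        have h3 : (1:ℤ) ≤ F := by exact_mod_cast hF1
        have h4 : (J.ncard:ℤ) ≤ 3*F := by omega
        rw [hJcdef]
        exact_mod_cast h4
      -- choose B
      set Af : Finset (Fin m) := (Set.toFinite A).toFinset with hAfdef
      have hminle : min Af.card F.toNat ≤ Af.card := min_le_left _ _
      obtain ⟨B, hBA, hBcard⟩ := Finset.exists_subset_card_eq hminle
      have hAfc : (Af.card : ℝ) = (A.ncard : ℝ) := by
        rw [Set.ncard_eq_toFinset_card _ (Set.toFinite A)]
      have hF0 : (0:ℤ) ≤ F := by
        have : (0:ℝ) ≤ (F:ℝ) := by linarith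
        exact_mod_cast this
      have hFtoNat : ((F.toNat : ℕ) : ℝ) = (F:ℝ) := by
        exact_mod_cast Int.toNat_of_nonneg hF0
      have hBreal : (B.card : ℝ) = min ((A.ncard:ℝ)) ((F:ℝ)) := by
        rw [hBcard, Nat.cast_min, hAfc, hFtoNat]
      have hbt : min ((F:ℝ)) (c^n * Jc) ≤ (B.card:ℝ) := by
        rw [hBreal]
        exact le_min IH (min_le_left _ _)
      have hbF : (B.card:ℝ) ≤ (F:ℝ) := by rw [hBreal]; exact min_le_right _ _
      have hb1 : min ((F:ℝ)) (c^n * Jc) ≤ (B.card:ℝ) := hbt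
      have hBmem : ∀ j ∈ B, j ∈ 𝒞 n ∧ j ∈ Tinf := by
        intro j hj
        have := hBA hj
        rw [hAfdef, Set.Finite.mem_toFinset] at this
        exact this
      have hBδ : (B.card:ℝ) ≤ δ * m := by linarith
      set IB : Finset (Fin m) := B ∪ A'f with hIBdef
      have hIBb : (IB.card : ℝ) ≤ (B.card:ℝ) + a' := by
        have h1 : IB.card ≤ B.card + A'f.card := Finset.card_union_le _ _
        have h2 : (IB.card:ℝ) ≤ (B.card:ℝ) + (A'f.card:ℝ) := by exact_mod_cast h1
        rw [hA'c] at h2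
        exact h2
      have hIBcard : (IB.card : ℝ) ≤ δ * m := by linarith
      -- overlap lemma from expansion
      have overlap : ∀ I : Finset (Fin m), (I.card : ℝ) ≤ δ * m → ∀ S : Finset (Fin k),
          (∀ i ∈ S, 1 ≤ (I.filter (fun j => toE i j)).card) →
          ∑ i ∈ S, (((I.filter (fun j => toE i j)).card : ℝ) - 1) ≤ ε * K * I.card := by
        intro I hI S hS
        set NI := Finset.univ.filter (fun i => ∃ j ∈ I, toE i j) with hNI
        have hSNI : S ⊆ NI := by
          intro i hi
          obtain ⟨j, hj⟩ := Finset.card_pos.mp (hS i hi)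
          simp only [Finset.mem_filter] at hj
          simp only [hNI, Finset.mem_filter]
          exact ⟨Finset.mem_univ _, j, hj.1, hj.2⟩
        have hd1 : ∀ i ∈ NI, (1:ℝ) ≤ ((I.filter (fun j => toE i j)).card : ℝ) := by
          intro i hi
          simp only [hNI, Finset.mem_filter, Finset.mem_univ, true_and] at hi
          obtain ⟨j, hj1, hj2⟩ := hi
          have : 0 < (I.filter (fun j => toE i j)).card :=
            Finset.card_pos.mpr ⟨j, Finset.mem_filter.mpr ⟨hj1, hj2⟩⟩
          exact_mod_cast this
        have hmono : ∑ i ∈ S, (((I.filter (fun j => toE i j)).card : ℝ) - 1)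
            ≤ ∑ i ∈ NI, (((I.filter (fun j => toE i j)).card : ℝ) - 1) := by
          apply Finset.sum_le_sum_of_subset_of_nonneg hSNI
          intro i hi _
          linarith [hd1 i hi]
        refine hmono.trans ?_
        have he := hexp I hI
        have h2 : Set.ncard {i | ∃ j ∈ I, toE i j} = NI.card := ncard_filter _
        rw [h2] at he
        have hcc : ∑ j ∈ I, ((Set.ncard {i | toE i j}):ℝ)
            = ∑ i ∈ NI, ((I.filter (fun j => toE i j)).card : ℝ) := by
          have h0 : ∑ i ∈ NI, (I.filter (fun j => toE i j)).card
              = ∑ i ∈ Finset.univ, (I.filter (fun j => toE i j)).card := by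
            apply Finset.sum_subset (Finset.filter_subset _ _)
            intro i _ hi
            simp only [hNI, Finset.mem_filter, Finset.mem_univ, true_and] at hi
            push_neg at hi
            rw [Finset.card_eq_zero, Finset.filter_eq_empty_iff]
            exact fun {j} hj => hi j hj
          have h1 : ∀ j, (Set.ncard {i | toE i j}) = (Finset.univ.filter (fun i => toE i j)).card :=
            fun j => ncard_filter _
          rw [show (∑ j ∈ I, ((Set.ncard {i | toE i j}):ℝ))
              = ((∑ j ∈ I, Set.ncard {i | toE i j} : ℕ) : ℝ) by push_cast; ring]
          rw [show (∑ i ∈ NI, ((I.filter (fun j => toE i j)).card : ℝ))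
              = ((∑ i ∈ NI, (I.filter (fun j => toE i j)).card : ℕ) : ℝ) by push_cast; ring]
          congr 1
          simp_rw [h1]
          rw [aux_count toE Finset.univ I, h0]
        rw [hcc] at he
        have hNc : (NI.card : ℝ) = ∑ i ∈ NI, (1:ℝ) := by
          rw [Finset.sum_const, nsmul_eq_mul, mul_one]
        rw [Finset.sum_sub_distrib]
        rw [hNc] at he
        linarith
      -- the set S of redirected left vertices
      set S : Finset (Fin k) :=
        Finset.univ.filter (fun i => i ∉ M ∧ Good i ∧ ∃ j ∈ B, fromE i j) with hSdef
      -- upper bound on S via expansion on IB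
      have hS2 : ∀ i ∈ S, 2 ≤ (IB.filter (fun j => toE i j)).card := by
        intro i hi
        simp only [hSdef, Finset.mem_filter, Finset.mem_univ, true_and] at hi
        obtain ⟨hiM, hiG, j, hjB, hij⟩ := hi
        obtain ⟨hj𝒞, hjT⟩ := hBmem j hjB
        obtain ⟨j', hj'𝒞, hj'ne, hij'⟩ := hshell n (Nat.lt_of_succ_le hnd) j hj𝒞 i hiM hij
        have hj'Tinf : j' ∈ Tinf := by
          intro h hh hj'T
          exact hiG j' (hTW h hh hj'T) hij'
        have hj'A : j' ∈ A'f := by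
          rw [hA'fdef, Set.Finite.mem_toFinset]
          exact ⟨hj'𝒞, hj'Tinf⟩
        have hpair : ({j, j'} : Finset (Fin m)) ⊆ IB.filter (fun j => toE i j) := by
          intro x hx
          simp only [Finset.mem_insert, Finset.mem_singleton] at hx
          rcases hx with rfl | rfl
          · exact Finset.mem_filter.mpr ⟨Finset.mem_union_left _ hjB, hsub _ _ hij⟩
          · exact Finset.mem_filter.mpr ⟨Finset.mem_union_right _ hj'A, hij'⟩
        calc 2 = ({j, j'} : Finset (Fin m)).card := (Finset.card_pair (Ne.symm hj'ne)).symm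
          _ ≤ _ := Finset.card_le_card hpair
      have hSup : (S.card : ℝ) ≤ ε * K * ((B.card:ℝ) + a') := by
        have h1 := overlap IB hIBcard S (fun i hi => le_trans (by norm_num) (hS2 i hi))
        have h2 : (S.card:ℝ) ≤ ∑ i ∈ S, (((IB.filter (fun j => toE i j)).card : ℝ) - 1) := by
          rw [show (S.card:ℝ) = ∑ i ∈ S, (1:ℝ) by rw [Finset.sum_const, nsmul_eq_mul, mul_one]]
          apply Finset.sum_le_sum
          intro i hi
          have h3 : (2:ℝ) ≤ ((IB.filter (fun j => toE i j)).card : ℝ) := by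
            exact_mod_cast hS2 i hi
          linarith
        have hεK : (0:ℝ) ≤ ε * K := by positivity
        have h4 : ε * K * (IB.card:ℝ) ≤ ε * K * ((B.card:ℝ) + a') :=
          mul_le_mul_of_nonneg_left hIBb hεK
        linarith
      -- lower bound on S
      set Dmj : Fin m → Finset (Fin k) :=
        fun j => Finset.univ.filter (fun i => (Good i ∧ i ∉ M) ∧ fromE i j) with hDmjdef
      have hKb : K * (B.card:ℝ) ≤ ∑ j ∈ B, ((Dj j).card : ℝ) := by
        have h1 : ∀ j ∈ B, K ≤ ((Dj j).card : ℝ) :=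
          fun j hj => le_of_lt (hdeg j (hBmem j hj).2)
        calc K * (B.card:ℝ) = ∑ _j ∈ B, K := by
              rw [Finset.sum_const, nsmul_eq_mul]; ring
          _ ≤ _ := Finset.sum_le_sum h1
      have hsplit : ∀ j, ((Dj j).card:ℝ) ≤ ((Dmj j).card:ℝ)
          + ((M.filter (fun i => fromE i j)).card:ℝ) := by
        intro j
        have hsub2 : Dj j ⊆ Dmj j ∪ M.filter (fun i => fromE i j) := by
          intro i hi
          simp only [hDjdef, Finset.mem_filter, Finset.mem_univ, true_and] at hi
          by_cases hiM : i ∈ M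
          · exact Finset.mem_union_right _ (Finset.mem_filter.mpr ⟨hiM, hi.1⟩)
          · exact Finset.mem_union_left _
              (Finset.mem_filter.mpr ⟨Finset.mem_univ _, ⟨hi.2, hiM⟩, hi.1⟩)
        have h1 : (Dj j).card ≤ (Dmj j).card + (M.filter (fun i => fromE i j)).card :=
          le_trans (Finset.card_le_card hsub2) (Finset.card_union_le _ _)
        exact_mod_cast h1
      have hMsum : ∑ j ∈ B, ((M.filter (fun i => fromE i j)).card : ℝ) ≤ K * Jc / 4 := by
        have h0 : ∑ j ∈ B, (M.filter (fun i => fromE i j)).card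
            = ∑ i ∈ M, (B.filter (fun j => fromE i j)).card := aux_count fromE M B
        have h1 : ∀ i ∈ M, (B.filter (fun j => fromE i j)).card
            ≤ Set.ncard {j | fromE i j} := by
          intro i _
          rw [ncard_filter]
          exact Finset.card_le_card (Finset.filter_subset_filter _ (Finset.subset_univ B))
        have h2 : ∑ j ∈ B, ((M.filter (fun i => fromE i j)).card : ℝ)
            ≤ ∑ i ∈ M, ((Set.ncard {j | fromE i j}):ℝ) := by
          rw [show ∑ j ∈ B, ((M.filter (fun i => fromE i j)).card : ℝ)
              = ((∑ j ∈ B, (M.filter (fun i => fromE i j)).card : ℕ):ℝ) by push_cast; ring]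
          rw [h0]
          push_cast
          apply Finset.sum_le_sum
          intro i hi
          exact_mod_cast h1 i hi
        have h3 : ∑ i ∈ M, ((Set.ncard {j | fromE i j}):ℝ) ≤ K * Jc / 4 := by
          have h4 := mul_le_mul_of_nonneg_left hM (by positivity : (0:ℝ) ≤ K / 2)
          have h5 : (K/2) * ((2/K) * ∑ i ∈ M, ((Set.ncard {j | fromE i j}):ℝ))
              = ∑ i ∈ M, ((Set.ncard {j | fromE i j}):ℝ) := by
            field_simp
          rw [hJcdef]
          rw [h5] at h4
          linarith
        linarith
      have hDm : ∑ j ∈ B, ((Dmj j).card : ℝ) ≤ (S.card:ℝ) + ε * K * (B.card:ℝ) := by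
        have h0 : ∑ j ∈ B, (Dmj j).card
            = ∑ i ∈ Finset.univ, (B.filter (fun j => (Good i ∧ i ∉ M) ∧ fromE i j)).card :=
          aux_count _ Finset.univ B
        have h1 : ∑ i ∈ Finset.univ, (B.filter (fun j => (Good i ∧ i ∉ M) ∧ fromE i j)).card
            = ∑ i ∈ S, (B.filter (fun j => fromE i j)).card := by
          rw [← Finset.sum_subset (Finset.subset_univ S)]
          · apply Finset.sum_congr rfl
            intro i hi
            simp only [hSdef, Finset.mem_filter, Finset.mem_univ, true_and] at hi
            congr 1
            apply Finset.filter_congr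
            intro j _
            tauto
          · intro i _ hi
            simp only [hSdef, Finset.mem_filter, Finset.mem_univ, true_and] at hi
            push_neg at hi
            rw [Finset.card_eq_zero, Finset.filter_eq_empty_iff]
            rintro j hj ⟨⟨hG, hMi⟩, hf⟩
            exact absurd hf ((hi hMi hG j hj))
          -- note: restriction direction
        have h2 : ∀ i ∈ S, ((B.filter (fun j => fromE i j)).card:ℝ)
            ≤ 1 + (((B.filter (fun j => toE i j)).card:ℝ) - 1) := by
          intro i _
          have := Finset.card_le_card
            (Finset.monotone_filter_right B (fun j _ (h : fromE i j) => hsub i j h))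
          have h3 : ((B.filter (fun j => fromE i j)).card:ℝ)
              ≤ ((B.filter (fun j => toE i j)).card:ℝ) := by exact_mod_cast this
          linarith
        have h4 : ∀ i ∈ S, 1 ≤ (B.filter (fun j => toE i j)).card := by
          intro i hi
          simp only [hSdef, Finset.mem_filter, Finset.mem_univ, true_and] at hi
          obtain ⟨_, _, j, hjB, hij⟩ := hi
          exact Finset.card_pos.mpr ⟨j, Finset.mem_filter.mpr ⟨hjB, hsub _ _ hij⟩⟩
        have h5 := overlap B hBδ S h4
        have h6 : ∑ j ∈ B, ((Dmj j).card : ℝ)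
            = ∑ i ∈ S, ((B.filter (fun j => fromE i j)).card:ℝ) := by
          rw [show ∑ j ∈ B, ((Dmj j).card : ℝ) = ((∑ j ∈ B, (Dmj j).card : ℕ):ℝ) by
            push_cast; ring]
          rw [h0, h1]
          push_cast
          ring
        rw [h6]
        have h7 : ∑ i ∈ S, ((B.filter (fun j => fromE i j)).card:ℝ)
            ≤ ∑ i ∈ S, (1 + (((B.filter (fun j => toE i j)).card:ℝ) - 1)) :=
          Finset.sum_le_sum h2
        have h8 : ∑ i ∈ S, (1 + (((B.filter (fun j => toE i j)).card:ℝ) - 1))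
            = (S.card:ℝ) + ∑ i ∈ S, (((B.filter (fun j => toE i j)).card:ℝ) - 1) := by
          rw [Finset.sum_add_distrib, Finset.sum_const, nsmul_eq_mul, mul_one]
        linarith
      -- combine
      have hchain : K * (B.card:ℝ) - ε * K * (B.card:ℝ) - K * Jc / 4 ≤ (S.card:ℝ) := by
        have h1 : ∑ j ∈ B, ((Dj j).card : ℝ)
            ≤ ∑ j ∈ B, ((Dmj j).card:ℝ) + ∑ j ∈ B, ((M.filter (fun i => fromE i j)).card:ℝ) := by
          rw [← Finset.sum_add_distrib]
          exact Finset.sum_le_sum (fun j _ => hsplit j)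
        linarith
      have hdiv : (B.card:ℝ) - 2 * ε * (B.card:ℝ) - Jc / 4 ≤ ε * a' := by
        have h1 : K * ((B.card:ℝ) - 2*ε*(B.card:ℝ) - Jc/4) ≤ K * (ε * a') := by
          linarith [hchain, hSup]
        exact le_of_mul_le_mul_left h1 hK
      -- final arithmetic: contradiction
      have hεc : ε * c = 1 / 32 := by
        rw [hcdef]
        field_simp
      rcases le_or_gt ((F:ℝ)) (c^n * Jc) with hcase | hcase
      · -- min = F
        have hbF' : (F:ℝ) ≤ (B.card:ℝ) := by
          rw [min_eq_left hcase] at hbt; exact hbt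
        have hεa : ε * (F:ℝ) ≤ ε * a' := by
          have p1 : (1 - 2*ε) * (F:ℝ) ≤ (1 - 2*ε) * (B.card:ℝ) :=
            mul_le_mul_of_nonneg_left hbF' (by linarith)
          have p2 : (0:ℝ) ≤ (1/4 - 3*ε) * (F:ℝ) :=
            mul_nonneg (by linarith) (by linarith)
          linarith [hdiv, hJ3F]
        have hFa : (F:ℝ) ≤ a' := le_of_mul_le_mul_left hεa hε0
        have : min ((F:ℝ)) (c^(n+1) * Jc) ≤ a' := le_trans (min_le_left _ _) hFa
        linarith
      · -- min at c^n * Jc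
        have hbt' : c^n * Jc ≤ (B.card:ℝ) := by
          rw [min_eq_right (le_of_lt hcase)] at hbt; exact hbt
        have ht1 : Jc ≤ c^n * Jc := le_mul_of_one_le_left (by linarith) hcn
        have hc2 : ε * (c^(n+1) * Jc) = (c^n * Jc) / 32 := by
          rw [pow_succ]
          linear_combination (c^n * Jc) * hεc
        have hεa : ε * (c^(n+1) * Jc) ≤ ε * a' := by
          rw [hc2]
          have p1 : (1 - 2*ε) * (c^n * Jc) ≤ (1 - 2*ε) * (B.card:ℝ) :=
            mul_le_mul_of_nonneg_left hbt' (by linarith)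
          have p2 : (0:ℝ) ≤ (23/32 - 2*ε) * (c^n * Jc) :=
            mul_nonneg (by linarith) (by linarith)
          linarith [hdiv, ht1]
        have hca : c^(n+1) * Jc ≤ a' := le_of_mul_le_mul_left hεa hε0
        have : min ((F:ℝ)) (c^(n+1) * Jc) ≤ a' := le_trans (min_le_right _ _) hca
        linarith

  intro ℓ hℓ
  calc min ((F:ℝ)) (c ^ ℓ * Jc) ≤ ((𝒞 ℓ ∩ Tinf).ncard : ℝ) := key ℓ hℓ
    _ ≤ ((𝒞 ℓ).ncard : ℝ) := by
        exact_mod_cast Set.ncard_le_ncard Set.inter_subset_left (Set.toFinite _)
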